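/- Let q be an odd prime power, k a positive integer, l an integer with 1 < l < k − 1, and G a finite loopless digraph with minrank_q(G) ≤ k. Then |G| / N(Ḡ, K_l) ≤ 4·q^l·(q^k − 1) / ((q² − 1)(q^l − 1)). Equivalently, lind_q(G) ≥ log_q(1 + ((q² − 1)(q^l − 1)/(4q^l)) · |G| / N(Ḡ, K_l)). -/

import Mathlib

/-- `minrank F G` of a loopless digraph `G` on `{1,…,n}` over a field `F`: the minimum
rank of an `n × n` matrix `M` over `F` with `M i i ≠ 0` for all `i` and `M i j = 0`
whenever `i ≠ j` and `(i,j)` is not an edge of `G`. -/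
noncomputable def minrank {n : ℕ} (F : Type) [Field F] (G : Fin n → Fin n → Prop) : ℕ :=
  sInf {r | ∃ M : Matrix (Fin n) (Fin n) F, (∀ i, M i i ≠ 0) ∧
    (∀ i j, i ≠ j → ¬ G i j → M i j = 0) ∧ M.rank = r}

/-- `Nhom L K` is the maximum number of vertices of an induced subdigraph `L'` of `L`
(given by a subset `S` of the vertices of `L` with the restricted adjacency) such that
there exists a homomorphism from `L'` to `K`. -/
noncomputable def Nhom {VL VK : Type*} (L : VL → VL → Prop) (K : VK → VK → Prop) : ℕ :=
  sSup {n | ∃ S : Set VL,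
    (∃ f : S → VK, ∀ x y : S, L x.val y.val → K (f x) (f y)) ∧ Nat.card S = n}

/-- The directional complement of a loopless digraph. -/
def digraphCompl {V : Type*} (G : V → V → Prop) : V → V → Prop :=
  fun a b => a ≠ b ∧ ¬ G a b


open Module Finset
open scoped Classical

lemma swap_count {α β : Type*} [DecidableEq α] [DecidableEq β] (A : Finset α) (B : Finset β)
    (P : α → β → Prop) [∀ a b, Decidable (P a b)] :
    ∑ y ∈ B, (A.filter (fun a => P a y)).card = ∑ a ∈ A, (B.filter (fun y => P a y)).card := by
  simp only [Finset.card_filter]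
  exact Finset.sum_comm

section AuxCounting

variable {F : Type} [Field F] [Fintype F] {V : Type} [AddCommGroup V] [Module F V] [Fintype V]

lemma card_filter_mem (p : Submodule F V) [DecidablePred (· ∈ p)] :
    (Finset.univ.filter (fun v : V => v ∈ p)).card = Fintype.card F ^ finrank F p := by
  rw [← Fintype.card_subtype]
  exact card_eq_pow_finrank

lemma finrank_span_pair {v u : V} (hv : v ≠ 0) (hu : u ∉ Submodule.span F {v}) :
    finrank F (Submodule.span F {v, u} : Submodule F V) = 2 := by
  have hli : LinearIndependent F ![v, u] := by
    rw [linearIndependent_fin2]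
    constructor
    · intro h
      simp only [Matrix.cons_val_one, Matrix.head_cons, Matrix.cons_val_zero] at h
      exact hu (h ▸ Submodule.zero_mem _)
    intro a h
    simp only [Matrix.cons_val_one, Matrix.head_cons, Matrix.cons_val_zero] at h
    rcases eq_or_ne a 0 with rfl | ha
    · rw [zero_smul] at h; exact hv h.symm
    · exact hu (Submodule.mem_span_singleton.mpr
        ⟨a⁻¹, by rw [← h, smul_smul, inv_mul_cancel₀ ha, one_smul]⟩)
  have h2 := finrank_span_eq_card hli
  have hrange : Set.range ![v, u] = {v, u} := by
    simp [Matrix.range_cons, Matrix.range_empty, Set.pair_comm u v]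
  rw [hrange] at h2
  simpa using h2

lemma t1_mul [Fintype (Submodule F V)] {v : V} (hv : v ≠ 0) :
    (Finset.univ.filter (fun W : Submodule F V => finrank F W = 2 ∧ v ∈ W)).card
      * (Fintype.card F ^ 2 - Fintype.card F)
    = Fintype.card F ^ finrank F V - Fintype.card F := by
  classical
  set q := Fintype.card F with hqdef
  set 𝒲 := Finset.univ.filter (fun W : Submodule F V => finrank F W = 2 ∧ v ∈ W) with h𝒲
  set A : Finset V := Finset.univ.filter (fun u => u ∉ Submodule.span F {v}) with hA
  have hAcard : A.card = q ^ finrank F V - q := by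
    rw [hA, Finset.filter_not, Finset.card_sdiff_of_subset (Finset.filter_subset _ _),
      card_filter_mem, finrank_span_singleton hv, pow_one, Finset.card_univ,
      card_eq_pow_finrank (K := F) (V := V)]
  have hmap : ∀ u ∈ A, Submodule.span F {v, u} ∈ 𝒲 := by
    intro u hu
    have hu' : u ∉ Submodule.span F {v} := by
      simpa [hA] using hu
    simp only [h𝒲, Finset.mem_filter, Finset.mem_univ, true_and]
    exact ⟨finrank_span_pair hv hu', Submodule.subset_span (by simp)⟩
  have hfib := Finset.card_eq_sum_card_fiberwise hmap
  have hfibcard : ∀ W ∈ 𝒲, (A.filter (fun u => Submodule.span F {v, u} = W)).card = q ^ 2 - q := by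
    intro W hW
    simp only [h𝒲, Finset.mem_filter, Finset.mem_univ, true_and] at hW
    obtain ⟨hW2, hvW⟩ := hW
    have hsub : Submodule.span F {v} ≤ W := (Submodule.span_singleton_le_iff_mem v W).mpr hvW
    have heq : A.filter (fun u => Submodule.span F {v, u} = W)
        = (Finset.univ.filter (fun u : V => u ∈ W)) \
          (Finset.univ.filter (fun u : V => u ∈ Submodule.span F {v})) := by
      ext u
      simp only [hA, Finset.filter_filter, Finset.mem_filter, Finset.mem_univ, true_and,
        Finset.mem_sdiff]
      constructor
      · rintro ⟨hns, hsp⟩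
        exact ⟨hsp ▸ Submodule.subset_span (by simp), hns⟩
      · rintro ⟨huW, hns⟩
        refine ⟨hns, ?_⟩
        apply Submodule.eq_of_le_of_finrank_le
        · rw [Submodule.span_le, Set.insert_subset_iff, Set.singleton_subset_iff]
          exact ⟨hvW, huW⟩
        · rw [hW2, finrank_span_pair hv hns]
    have hsubset : (Finset.univ.filter (fun u : V => u ∈ Submodule.span F {v}))
        ⊆ (Finset.univ.filter (fun u : V => u ∈ W)) := by
      intro x hx
      simp only [Finset.mem_filter, Finset.mem_univ, true_and] at hx ⊢
      exact hsub hx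
    rw [heq, Finset.card_sdiff_of_subset hsubset, card_filter_mem, card_filter_mem, hW2,
      finrank_span_singleton hv, pow_one]
  have : A.card = 𝒲.card * (q ^ 2 - q) := by
    rw [hfib, Finset.sum_congr rfl hfibcard, Finset.sum_const, smul_eq_mul]
  rw [← this, hAcard]

lemma exists_good_W [Fintype (Submodule F V)] {n : ℕ} (hn : 0 < n) (b : Fin n → V)
    (hb : ∀ i, b i ≠ 0) (hr : 2 ≤ finrank F V) :
    ∃ W : Submodule F V, finrank F W = 2 ∧
      n * (Fintype.card F ^ 2 - 1) ≤ (Fintype.card F ^ finrank F V - 1)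
        * (Finset.univ.filter (fun i : Fin n => b i ∈ W)).card := by
  classical
  set q := Fintype.card F with hqdef
  set r := finrank F V with hrdef
  have hq2 : 2 ≤ q := Fintype.one_lt_card_iff_nontrivial.mpr inferInstance
  have hqr : q < q ^ r := by
    conv_lhs => rw [← pow_one q]
    exact Nat.pow_lt_pow_right (by omega) (by omega)
  have hq2q : 0 < q ^ 2 - q := by
    have : q < q ^ 2 := by
      conv_lhs => rw [← pow_one q]
      exact Nat.pow_lt_pow_right (by omega) (by omega)
    omega
  set 𝒲₂ := Finset.univ.filter (fun W : Submodule F V => finrank F W = 2) with h𝒲₂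
  have hT : ∀ v : V, v ≠ 0 → (𝒲₂.filter (fun W => v ∈ W)).card * (q ^ 2 - q) = q ^ r - q := by
    intro v hv
    have := t1_mul (F := F) (V := V) hv
    rw [h𝒲₂, Finset.filter_filter]
    exact this
  -- 𝒲₂ is nonempty
  have h𝒲ne : 𝒲₂.Nonempty := by
    have h0 := hT (b ⟨0, hn⟩) (hb _)
    have hpos : 0 < (𝒲₂.filter (fun W => b ⟨0, hn⟩ ∈ W)).card := by
      rcases Nat.eq_zero_or_pos (𝒲₂.filter (fun W => b ⟨0, hn⟩ ∈ W)).card with h | h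
      · rw [h, Nat.zero_mul] at h0; omega
      · exact h
    obtain ⟨W, hW⟩ := Finset.card_pos.mp hpos
    exact ⟨W, Finset.mem_of_mem_filter W hW⟩
  -- global sum 1
  have hs1 : ∑ W ∈ 𝒲₂, (Finset.univ.filter (fun i : Fin n => b i ∈ W)).card * (q ^ 2 - q)
      = n * (q ^ r - q) := by
    rw [← Finset.sum_mul, swap_count Finset.univ 𝒲₂ (fun i W => b i ∈ W), Finset.sum_mul]
    calc ∑ i : Fin n, (𝒲₂.filter (fun W => b i ∈ W)).card * (q ^ 2 - q)
        = ∑ _i : Fin n, (q ^ r - q) := Finset.sum_congr rfl (fun i _ => hT (b i) (hb i))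
      _ = n * (q ^ r - q) := by rw [Finset.sum_const, Finset.card_univ, Fintype.card_fin, smul_eq_mul]
  -- global sum 2: number of 2-dim subspaces
  have hs2 : 𝒲₂.card * ((q ^ 2 - 1) * (q ^ 2 - q)) = (q ^ r - 1) * (q ^ r - q) := by
    have hz : ∀ W ∈ 𝒲₂, ((Finset.univ.filter (fun v : V => v ≠ 0)).filter (fun v => v ∈ W)).card
        = q ^ 2 - 1 := by
      intro W hW
      simp only [h𝒲₂, Finset.mem_filter, Finset.mem_univ, true_and] at hW
      have : (Finset.univ.filter (fun v : V => v ≠ 0)).filter (fun v => v ∈ W)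
          = (Finset.univ.filter (fun v : V => v ∈ W)).erase 0 := by
        ext x
        simp only [Finset.filter_filter, Finset.mem_filter, Finset.mem_univ, true_and,
          Finset.mem_erase]
      rw [this, Finset.card_erase_of_mem (by
        simp only [Finset.mem_filter, Finset.mem_univ, true_and]; exact W.zero_mem),
        card_filter_mem, hW]
    have hswap := swap_count (Finset.univ.filter (fun v : V => v ≠ 0)) 𝒲₂
      (fun (v : V) (W : Submodule F V) => v ∈ W)
    have hcv : (Finset.univ.filter (fun v : V => v ≠ 0)).card = q ^ r - 1 := by
      rw [Finset.filter_ne', Finset.card_erase_of_mem (Finset.mem_univ 0), Finset.card_univ,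
        card_eq_pow_finrank (K := F) (V := V)]
    calc 𝒲₂.card * ((q ^ 2 - 1) * (q ^ 2 - q))
        = (∑ W ∈ 𝒲₂, (q ^ 2 - 1)) * (q ^ 2 - q) := by
          rw [Finset.sum_const, smul_eq_mul]; ring
      _ = (∑ W ∈ 𝒲₂, ((Finset.univ.filter (fun v : V => v ≠ 0)).filter (fun v => v ∈ W)).card)
            * (q ^ 2 - q) := by rw [Finset.sum_congr rfl hz]
      _ = (∑ v ∈ Finset.univ.filter (fun v : V => v ≠ 0),
            (𝒲₂.filter (fun W => v ∈ W)).card) * (q ^ 2 - q) := by rw [hswap]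
      _ = ∑ v ∈ Finset.univ.filter (fun v : V => v ≠ 0),
            (𝒲₂.filter (fun W => v ∈ W)).card * (q ^ 2 - q) := by rw [Finset.sum_mul]
      _ = ∑ v ∈ Finset.univ.filter (fun v : V => v ≠ 0), (q ^ r - q) := by
          refine Finset.sum_congr rfl (fun v hv => ?_)
          simp only [Finset.mem_filter, Finset.mem_univ, true_and] at hv
          exact hT v hv
      _ = (q ^ r - 1) * (q ^ r - q) := by rw [Finset.sum_const, smul_eq_mul, hcv]
  -- choose a good W
  have hchoice : ∃ W ∈ 𝒲₂, n * (q ^ r - q)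
      ≤ 𝒲₂.card * ((Finset.univ.filter (fun i : Fin n => b i ∈ W)).card * (q ^ 2 - q)) := by
    apply Finset.exists_le_of_sum_le h𝒲ne
    rw [Finset.sum_const, smul_eq_mul, ← Finset.mul_sum, hs1]
  obtain ⟨W, hW𝒲, hWle⟩ := hchoice
  simp only [h𝒲₂, Finset.mem_filter, Finset.mem_univ, true_and] at hW𝒲
  refine ⟨W, hW𝒲, ?_⟩
  set m := (Finset.univ.filter (fun i : Fin n => b i ∈ W)).card with hm
  -- multiply hWle by (q^2-1) and use hs2
  have h3 : (n * (q ^ 2 - 1)) * ((q ^ r - q) * (q ^ 2 - q))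
      ≤ ((q ^ r - 1) * m) * ((q ^ r - q) * (q ^ 2 - q)) := by
    calc (n * (q ^ 2 - 1)) * ((q ^ r - q) * (q ^ 2 - q))
        = (n * (q ^ r - q)) * ((q ^ 2 - 1) * (q ^ 2 - q)) := by ring
      _ ≤ (𝒲₂.card * (m * (q ^ 2 - q))) * ((q ^ 2 - 1) * (q ^ 2 - q)) :=
          Nat.mul_le_mul_right _ hWle
      _ = (𝒲₂.card * ((q ^ 2 - 1) * (q ^ 2 - q))) * (m * (q ^ 2 - q)) := by ring
      _ = ((q ^ r - 1) * (q ^ r - q)) * (m * (q ^ 2 - q)) := by rw [hs2]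
      _ = ((q ^ r - 1) * m) * ((q ^ r - q) * (q ^ 2 - q)) := by ring
  have hpos : 0 < (q ^ r - q) * (q ^ 2 - q) := Nat.mul_pos (by omega) hq2q
  exact Nat.le_of_mul_le_mul_right h3 hpos

end AuxCounting

lemma half_card {X : Type*} [Fintype X] [DecidableEq X] {a c : X} (h : a ≠ c) :
    Fintype.card (X → Bool) ≤ 2 * (Finset.univ.filter (fun g : X → Bool => g a ≠ g c)).card := by
  classical
  have hle : (Finset.univ.filter (fun g : X → Bool => ¬ (g a ≠ g c))).card
      ≤ (Finset.univ.filter (fun g : X → Bool => g a ≠ g c)).card := by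
    apply Finset.card_le_card_of_injOn (fun g => Function.update g a (!(g a)))
    · intro g hg
      simp only [Finset.coe_filter, Set.mem_setOf_eq, Finset.mem_filter, Finset.mem_univ, true_and, not_not] at hg ⊢
      rw [Function.update_self, Function.update_of_ne (Ne.symm h)]
      rw [← hg]
      cases g a <;> simp
    · intro g hg g' hg' hgg'
      have h2 : Function.update g a (!(g a)) = Function.update g' a (!(g' a)) := hgg'
      funext x
      by_cases hx : x = a
      · subst hx
        have h3 := congrFun h2 x
        rw [Function.update_self, Function.update_self] at h3
        cases hga : g x <;> cases hga' : g' x <;> rw [hga, hga'] at h3 <;> simp_all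
      · have h3 := congrFun h2 x
        rwa [Function.update_of_ne hx, Function.update_of_ne hx] at h3
  have htot := Finset.card_filter_add_card_filter_not
    (s := (Finset.univ : Finset (X → Bool))) (fun g : X → Bool => g a ≠ g c)
  rw [Finset.card_univ] at htot
  rw [← htot]
  linarith

section MainCount

variable {F : Type} [Field F] [Fintype F] {V : Type} [AddCommGroup V] [Module F V] [Fintype V]

lemma main_count {n : ℕ} (hn : 0 < n) (b : Fin n → V) (φ : Fin n → (V →ₗ[F] F))
    (hbb : ∀ i, φ i (b i) ≠ 0) (hr : 2 ≤ finrank F V) :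
    ∃ S : Finset (Fin n), ∃ f : Fin n → Bool,
      (∀ i ∈ S, ∀ j ∈ S, φ i (b j) = 0 → f i ≠ f j) ∧
      n * (Fintype.card F ^ 2 - 1) ≤ (Fintype.card F ^ finrank F V - 1) * (2 * S.card) := by
  classical
  letI : Fintype (Submodule F V) := Fintype.ofFinite _
  have hb : ∀ i, b i ≠ 0 := fun i hi => hbb i (by rw [hi, map_zero])
  obtain ⟨W, hW2, hWcard⟩ := exists_good_W hn b hb hr
  set I := Finset.univ.filter (fun i : Fin n => b i ∈ W) with hI
  -- the enemy line of each vertex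
  set E : Fin n → Submodule F V :=
    fun i => Submodule.map W.subtype (LinearMap.ker ((φ i).comp W.subtype)) with hE
  have hE1 : ∀ i ∈ I, finrank F (E i) = 1 := by
    intro i hi
    simp only [hI, Finset.mem_filter, Finset.mem_univ, true_and] at hi
    set ψ := (φ i).comp W.subtype with hψ
    have hψne : ψ ⟨b i, hi⟩ ≠ 0 := hbb i
    have hrange : LinearMap.range ψ = ⊤ := by
      rcases Ideal.eq_bot_or_top (LinearMap.range ψ) with hbot | htop
      · exfalso
        apply hψne
        have : ψ ⟨b i, hi⟩ ∈ LinearMap.range ψ := LinearMap.mem_range_self _ _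
        rw [hbot] at this
        exact (Submodule.mem_bot F).mp this
      · exact htop
    have hrn := LinearMap.finrank_range_add_finrank_ker ψ
    rw [hrange, finrank_top, finrank_self] at hrn
    have hker : finrank F (LinearMap.ker ψ) = 1 := by
      have : finrank F W = 2 := hW2
      omega
    rw [hE]
    rw [Submodule.finrank_map_subtype_eq]
    exact hker
  have hbE : ∀ i ∈ I, b i ∉ E i := by
    intro i hi hmem
    rw [hE] at hmem
    obtain ⟨x, hx, hxe⟩ := Submodule.mem_map.mp hmem
    rw [LinearMap.mem_ker] at hx
    apply hbb i
    rw [← show (x : V) = b i from hxe]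
    exact hx
  have hEW : ∀ i j, j ∈ I → φ i (b j) = 0 → b j ∈ E i := by
    intro i j hj h0
    simp only [hI, Finset.mem_filter, Finset.mem_univ, true_and] at hj
    rw [hE]
    exact Submodule.mem_map.mpr ⟨⟨b j, hj⟩, LinearMap.mem_ker.mpr h0, rfl⟩
  have hspanE : ∀ i j, i ∈ I → j ∈ I → φ i (b j) = 0 → Submodule.span F {b j} = E i := by
    intro i j hi hj h0
    apply Submodule.eq_of_le_of_finrank_le
    · exact (Submodule.span_singleton_le_iff_mem _ _).mpr (hEW i j hj h0)
    · rw [hE1 i hi, finrank_span_singleton (hb j)]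
  have hEne : ∀ i ∈ I, E i ≠ Submodule.span F {b i} := by
    intro i hi hcontra
    exact hbE i hi (hcontra ▸ Submodule.mem_span_singleton_self (b i))
  -- averaging over colorings of lines
  set P : Fin n → (Submodule F V → Bool) → Prop :=
    fun i g => g (E i) ≠ g (Submodule.span F {b i}) with hP
  have hhalf : ∀ i ∈ I, Fintype.card (Submodule F V → Bool)
      ≤ 2 * (Finset.univ.filter (fun g : Submodule F V → Bool => P i g)).card := by
    intro i hi
    exact half_card (hEne i hi)
  have hsum : ∑ g : Submodule F V → Bool, (I.filter (fun i => P i g)).card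
      = ∑ i ∈ I, (Finset.univ.filter (fun g : Submodule F V → Bool => P i g)).card :=
    swap_count I Finset.univ P
  have hgood : ∃ g : Submodule F V → Bool, I.card ≤ 2 * (I.filter (fun i => P i g)).card := by
    have hne : (Finset.univ : Finset (Submodule F V → Bool)).Nonempty :=
      Finset.univ_nonempty
    obtain ⟨g, -, hg⟩ := Finset.exists_le_of_sum_le (f := fun _ => I.card)
      (g := fun g : Submodule F V → Bool => 2 * (I.filter (fun i => P i g)).card) hne (by
        rw [Finset.sum_const, smul_eq_mul, ← Finset.mul_sum, hsum, Finset.mul_sum]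
        calc Finset.univ.card * I.card
            = ∑ i ∈ I, Fintype.card (Submodule F V → Bool) := by
              rw [Finset.sum_const, smul_eq_mul, Finset.card_univ]; ring
          _ ≤ ∑ i ∈ I, 2 * (Finset.univ.filter (fun g : Submodule F V → Bool => P i g)).card :=
              Finset.sum_le_sum hhalf)
    exact ⟨g, hg⟩
  obtain ⟨g, hg⟩ := hgood
  refine ⟨I.filter (fun i => P i g), fun i => g (Submodule.span F {b i}), ?_, ?_⟩
  · intro i hi j hj h0
    rw [Finset.mem_filter] at hi hj
    have hsp := hspanE i j hi.1 hj.1 h0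
    have hPi : P i g := hi.2
    rw [hP] at hPi
    intro hcontra
    apply hPi
    have hc : g (Submodule.span F {b i}) = g (Submodule.span F {b j}) := hcontra
    rw [hsp] at hc
    exact hc.symm
  · calc n * (Fintype.card F ^ 2 - 1)
        ≤ (Fintype.card F ^ finrank F V - 1) * I.card := hWcard
      _ ≤ (Fintype.card F ^ finrank F V - 1) * (2 * (I.filter (fun i => P i g)).card) :=
          Nat.mul_le_mul_left _ hg

end MainCount

lemma le_Nhom {n l : ℕ} (G : Fin n → Fin n → Prop) (S : Set (Fin n)) (f : S → Fin l)
    (hf : ∀ x y : S, digraphCompl G x.val y.val → f x ≠ f y) :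
    Nat.card S ≤ Nhom (digraphCompl G) (fun a b : Fin l => a ≠ b) := by
  apply le_csSup
  · refine ⟨n, ?_⟩
    rintro m ⟨S', -, rfl⟩
    calc Nat.card S' ≤ Nat.card (Fin n) :=
          Nat.card_le_card_of_injective Subtype.val Subtype.val_injective
      _ = n := by simp
  · exact ⟨S, ⟨f, hf⟩, rfl⟩

/-- Let `q` be an odd prime power, `k` a positive integer, `1 < l < k - 1`, and `G` a
finite loopless digraph on `n` vertices with `minrank_q(G) ≤ k`.  Then
`|G| / N(Ḡ, K_l) ≤ 4 q^l (q^k - 1) / ((q² - 1)(q^l - 1))` (stated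
cross-multiplied), where `K_l` is the complete digraph on `l` vertices. -/
theorem Nhom_ratio_of_minrank_le (q k l n : ℕ) (hq : IsPrimePow q) (hodd : Odd q)
    (hk : 0 < k) (hl : 1 < l) (hlk : l < k - 1)
    (F : Type) [Field F] [Fintype F] (hF : Fintype.card F = q)
    (G : Fin n → Fin n → Prop) (hloopless : ∀ i, ¬ G i i)
    (hmr : minrank F G ≤ k) :
    n * ((q ^ 2 - 1) * (q ^ l - 1)) ≤
      Nhom (digraphCompl G) (fun a b : Fin l => a ≠ b) * (4 * q ^ l * (q ^ k - 1)) := by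
  classical
  have hq2 : 2 ≤ q := hq.two_le
  have hk4 : 4 ≤ k := by omega
  rcases Nat.eq_zero_or_pos n with rfl | hn
  · simp
  set N := Nhom (digraphCompl G) (fun a b : Fin l => a ≠ b) with hN
  -- extract a matrix of rank ≤ k
  have hne : {r | ∃ M : Matrix (Fin n) (Fin n) F, (∀ i, M i i ≠ 0) ∧
      (∀ i j, i ≠ j → ¬ G i j → M i j = 0) ∧ M.rank = r}.Nonempty :=
    ⟨(1 : Matrix (Fin n) (Fin n) F).rank, 1, fun i => by simp [Matrix.one_apply_eq],
      fun i j hij _ => Matrix.one_apply_ne hij, rfl⟩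
  obtain ⟨M, hMd, hMz, hMr⟩ := Nat.sInf_mem hne
  have hrank : M.rank ≤ k := by
    rw [hMr]; exact hmr
  -- set up the column space
  set V : Submodule F (Fin n → F) := LinearMap.range M.mulVecLin with hV
  haveI : Fintype V := Fintype.ofFinite _
  set b : Fin n → V := fun j => ⟨M.mulVec (Pi.single j 1),
    LinearMap.mem_range.mpr ⟨Pi.single j 1, rfl⟩⟩ with hb
  set φ : Fin n → (V →ₗ[F] F) := fun i => (LinearMap.proj i).comp V.subtype with hφ
  have key : ∀ i j, φ i (b j) = M i j := by
    intro i j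
    simp [hφ, hb, Matrix.mulVec_single]
  have hbb : ∀ i, φ i (b i) ≠ 0 := fun i => by rw [key]; exact hMd i
  have hb0 : ∀ i, b i ≠ 0 := fun i hzero => hbb i (by rw [hzero, map_zero])
  have hedge : ∀ i j, digraphCompl G i j → φ i (b j) = 0 := by
    rintro i j ⟨hij, hnG⟩
    rw [key]
    exact hMz i j hij hnG
  have hrk : Module.finrank F V ≤ k := hrank
  rcases le_or_gt (Module.finrank F V) 1 with hr1 | hr2
  -- degenerate case: rank ≤ 1, no edges in the complement at all
  · have hNoEdge : ∀ i j : Fin n, ¬ digraphCompl G i j := by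
      intro i j hedge'
      have h0 : φ i (b j) = 0 := hedge i j hedge'
      haveI : Nontrivial V := ⟨b i, 0, hb0 i⟩
      have hrpos : 0 < Module.finrank F V := Module.finrank_pos
      have hr1' : Module.finrank F V = 1 := le_antisymm hr1 hrpos
      have hspan : Submodule.span F {b i} = ⊤ :=
        Submodule.eq_top_of_finrank_eq (by rw [finrank_span_singleton (hb0 i), hr1'])
      have hbj : b j ∈ Submodule.span F {b i} := by rw [hspan]; exact Submodule.mem_top
      obtain ⟨a, ha⟩ := Submodule.mem_span_singleton.mp hbj
      have ha0 : a ≠ 0 := fun h => hb0 j (by rw [← ha, h, zero_smul])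
      rw [← ha, map_smul, smul_eq_mul] at h0
      rcases mul_eq_zero.mp h0 with h | h
      · exact ha0 h
      · exact hbb i h
    have hle := le_Nhom G Set.univ (fun _ => (⟨0, lt_trans Nat.zero_lt_one hl⟩ : Fin l))
      (fun x y hxy => absurd hxy (hNoEdge x.val y.val))
    have hcard : Nat.card (Set.univ : Set (Fin n)) = n := by
      rw [Nat.card_coe_set_eq, Set.ncard_univ, Nat.card_eq_fintype_card, Fintype.card_fin]
    rw [hcard] at hle
    calc n * ((q ^ 2 - 1) * (q ^ l - 1))
        ≤ N * ((q ^ k - 1) * (4 * q ^ l)) := by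
          refine Nat.mul_le_mul hle (Nat.mul_le_mul ?_ ?_)
          · exact Nat.sub_le_sub_right (Nat.pow_le_pow_right (by linarith) (by linarith)) 1
          · calc q ^ l - 1 ≤ q ^ l := Nat.sub_le _ _
              _ ≤ 4 * q ^ l := Nat.le_mul_of_pos_left _ (by norm_num)
      _ = N * (4 * q ^ l * (q ^ k - 1)) := by ring
  -- main case
  · obtain ⟨S, f, hhom, hsize⟩ := main_count hn b φ hbb hr2
    set Sset : Set (Fin n) := (↑S : Set (Fin n)) with hSset
    have hfl : ∀ x y : Sset, digraphCompl G x.val y.val →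
        (fun z : Sset => if f z.val then (⟨1, hl⟩ : Fin l)
          else ⟨0, lt_trans Nat.zero_lt_one hl⟩) x
          ≠ (fun z : Sset => if f z.val then (⟨1, hl⟩ : Fin l)
          else ⟨0, lt_trans Nat.zero_lt_one hl⟩) y := by
      intro x y hxy
      have hx : x.val ∈ S := by exact_mod_cast x.property
      have hy : y.val ∈ S := by exact_mod_cast y.property
      have h0 : φ x.val (b y.val) = 0 := hedge _ _ hxy
      have hne := hhom x.val hx y.val hy h0
      intro hcontra
      have hcontra' : (if f x.val then (⟨1, hl⟩ : Fin l)
          else ⟨0, lt_trans Nat.zero_lt_one hl⟩)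
          = (if f y.val then (⟨1, hl⟩ : Fin l)
          else ⟨0, lt_trans Nat.zero_lt_one hl⟩) := hcontra
      by_cases hbx : f x.val = true <;> by_cases hby : f y.val = true
      · exact hne (hbx.trans hby.symm)
      · rw [if_pos hbx, if_neg hby] at hcontra'
        exact absurd (congrArg Fin.val hcontra') (by norm_num)
      · rw [if_neg hbx, if_pos hby] at hcontra'
        exact absurd (congrArg Fin.val hcontra') (by norm_num)
      · rw [Bool.not_eq_true] at hbx hby
        exact hne (hbx.trans hby.symm)
    have hle := le_Nhom G Sset _ hfl
    have hcard : Nat.card Sset = S.card := by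
      rw [Nat.card_coe_set_eq, Set.ncard_coe_finset]
    rw [hcard] at hle
    rw [hF] at hsize
    have h1 : n * (q ^ 2 - 1) ≤ (q ^ k - 1) * (2 * S.card) := by
      calc n * (q ^ 2 - 1) ≤ (q ^ Module.finrank F V - 1) * (2 * S.card) := hsize
        _ ≤ (q ^ k - 1) * (2 * S.card) := by
            apply Nat.mul_le_mul_right
            exact Nat.sub_le_sub_right (Nat.pow_le_pow_right (by linarith) hrk) 1
    calc n * ((q ^ 2 - 1) * (q ^ l - 1))
        = (n * (q ^ 2 - 1)) * (q ^ l - 1) := by ring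
      _ ≤ ((q ^ k - 1) * (2 * S.card)) * (q ^ l - 1) := Nat.mul_le_mul_right _ h1
      _ = (2 * (q ^ l - 1)) * ((q ^ k - 1) * S.card) := by ring
      _ ≤ (4 * q ^ l) * ((q ^ k - 1) * N) := by
          refine Nat.mul_le_mul ?_ (Nat.mul_le_mul_left _ hle)
          calc 2 * (q ^ l - 1) ≤ 2 * q ^ l := Nat.mul_le_mul_left _ (Nat.sub_le _ _)
            _ ≤ 4 * q ^ l := Nat.mul_le_mul_right _ (by norm_num)
      _ = N * (4 * q ^ l * (q ^ k - 1)) := by ring
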